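/- For the function B : Z_2^m → Z_2^m defined by B(x) = 0^{m-r}1^r where m-r is the position of the last (least significant) nonzero bit of x (and B(0^m) = 1^m), and with α_0, α_1, ..., α_{2^m-1} the binary representations of 0, 1, ..., 2^m-1 in order, the iterated XOR satisfies B(α_{k-1}) ⊕ B(α_{k-2}) ⊕ ... ⊕ B(α_0) ⊕ α_{k-1} = 1^m for every 1 ≤ k ≤ 2^m. -/

import Mathlib

/-- `B m x` : for `x ≠ 0`, the bit string whose `r` least significant bits are `1`,
where the least significant nonzero bit of `x` is at index `r - 1` from the LSB end
(i.e. position `m - r` from the MSB end); `B m 0 = 2^m - 1` (the all-ones string `1^m`).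
Here `r = (number of trailing zero bits of x) + 1 = padicValNat 2 x + 1`, and
`0^{m-r}1^r` is the number `2^r - 1`. -/
def B (m x : ℕ) : ℕ := if x = 0 then 2 ^ m - 1 else 2 ^ (padicValNat 2 x + 1) - 1

private lemma xor_pred (n : ℕ) (h : n ≠ 0) :
    n ^^^ (n - 1) = 2 ^ (padicValNat 2 n + 1) - 1 := by
  induction n using Nat.strong_induction_on with
  | _ n ih =>
    rcases Nat.even_or_odd n with he | ho
    · obtain ⟨a, rfl⟩ := he
      have ha : a ≠ 0 := by omega
      have h1 : a + a = Nat.bit false a := by simp [Nat.bit]; omega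
      have h2 : a + a - 1 = Nat.bit true (a - 1) := by simp [Nat.bit]; omega
      rw [h2, h1, Nat.xor_bit]
      have hv : padicValNat 2 (a + a) = padicValNat 2 a + 1 := by
        have : a + a = 2 * a := by ring
        rw [this, padicValNat.mul (by norm_num) ha, padicValNat.self (by norm_num)]
        omega
      have hv' : padicValNat 2 (Nat.bit false a) = padicValNat 2 a + 1 := h1 ▸ hv
      have := ih a (by omega) ha
      rw [this, hv']
      show 2 * (2 ^ (padicValNat 2 a + 1) - 1) + 1 = 2 ^ (padicValNat 2 a + 1 + 1) - 1
      have : 0 < 2 ^ (padicValNat 2 a + 1) := Nat.pow_pos (by norm_num)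
      rw [pow_succ _ (padicValNat 2 a + 1)]
      omega
    · obtain ⟨a, rfl⟩ := ho
      have h1 : 2 * a + 1 = Nat.bit true a := by simp [Nat.bit]
      have h2 : 2 * a + 1 - 1 = Nat.bit false a := by simp [Nat.bit]
      have hv : padicValNat 2 (2 * a + 1) = 0 :=
        padicValNat.eq_zero_of_not_dvd (by omega)
      have hv' : padicValNat 2 (Nat.bit true a) = 0 := h1 ▸ hv
      rw [h2, h1, Nat.xor_bit, hv']
      simp [Nat.bit]

/-- For `α_j` the binary representation of `j` (`0 ≤ j < 2^m`) and every `1 ≤ k ≤ 2^m`,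
`B(α_{k-1}) ⊕ B(α_{k-2}) ⊕ ⋯ ⊕ B(α_0) ⊕ α_{k-1} = 1^m`. -/
theorem iterated_xor_B_eq_all_ones (m k : ℕ) (hk1 : 1 ≤ k) (hk2 : k ≤ 2 ^ m) :
    ((List.range k).map (B m)).foldr (· ^^^ ·) 0 ^^^ (k - 1) = 2 ^ m - 1 := by
  induction k with
  | zero => omega
  | succ k ih =>
    rcases Nat.eq_zero_or_pos k with rfl | hk
    · simp [List.range_succ, B]
    · have hfold : ((List.range (k+1)).map (B m)).foldr (· ^^^ ·) 0
          = ((List.range k).map (B m)).foldr (· ^^^ ·) 0 ^^^ B m k := by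
        rw [List.range_succ, List.map_append, List.foldr_append]
        simp only [List.map_cons, List.map_nil, List.foldr_cons, List.foldr_nil,
          Nat.xor_zero]
        induction ((List.range k).map (B m)) with
        | nil => simp
        | cons a l ihl => simp only [List.foldr_cons, ihl, Nat.xor_assoc]
      have ihk := ih hk (by omega)
      rw [hfold, Nat.succ_sub_one]
      have hB : B m k = k ^^^ (k - 1) := by
        rw [B, if_neg (by omega), ← xor_pred k (by omega)]
      rw [hB]
      have : ((List.range k).map (B m)).foldr (· ^^^ ·) 0 ^^^ (k ^^^ (k - 1)) ^^^ k
          = ((List.range k).map (B m)).foldr (· ^^^ ·) 0 ^^^ (k - 1) := by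
        rw [Nat.xor_assoc, Nat.xor_assoc]
        congr 1
        rw [Nat.xor_comm (k-1) k, ← Nat.xor_assoc, Nat.xor_self, Nat.zero_xor]
      rw [this, ihk]
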